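/- Let K ≥ 2, δ ∈ [0,1], and let k1 ≠ k2 be two coordinate indices in {1,…,K}. The Lebesgue volume of the region R̂^{k1,k2}(δ) = {x ∈ [0,1]^K : x^{k1} ≥ x^{k2} − δ, and x^{k1} ≥ x^k for all k ∉ {k1,k2}} equals (1/(K−1))·(1 − (1−δ)^K/K). -/

import Mathlib

open MeasureTheory intervalIntegral

lemma calcA (K : ℕ) (hK : 2 ≤ K) (δ : ℝ) (hδ0 : 0 ≤ δ) (hδ1 : δ ≤ 1) :
    ∫ t in (0:ℝ)..1, (min (t + δ) 1) * t ^ (K - 2)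
      = (1 / ((K : ℝ) - 1)) * (1 - (1 - δ) ^ K / K) := by
  set c : ℝ := 1 - δ with hc
  have hc0 : 0 ≤ c := by linarith
  have hc1 : c ≤ 1 := by linarith
  have hcont : Continuous fun t : ℝ => (min (t + δ) 1) * t ^ (K - 2) := by
    continuity
  have hii : ∀ a b : ℝ, IntervalIntegrable (fun t : ℝ => (min (t + δ) 1) * t ^ (K - 2)) volume a b :=
    fun a b => hcont.intervalIntegrable a b
  have hsplit : ∫ t in (0:ℝ)..1, (min (t + δ) 1) * t ^ (K - 2)
      = (∫ t in (0:ℝ)..c, (min (t + δ) 1) * t ^ (K - 2))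
        + ∫ t in c..1, (min (t + δ) 1) * t ^ (K - 2) := by
    rw [integral_add_adjacent_intervals (hii 0 c) (hii c 1)]
  have h1 : ∫ t in (0:ℝ)..c, (min (t + δ) 1) * t ^ (K - 2)
      = ∫ t in (0:ℝ)..c, (t ^ (K - 1) + δ * t ^ (K - 2)) := by
    apply integral_congr
    intro t ht
    rw [Set.uIcc_of_le hc0] at ht
    have h1 : t + δ ≤ 1 := by have := ht.2; simp only [hc] at this ⊢; linarith
    show min (t + δ) 1 * t ^ (K - 2) = t ^ (K - 1) + δ * t ^ (K - 2)
    rw [min_eq_left h1]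
    have hn : K - 1 = (K - 2) + 1 := by omega
    rw [hn, pow_succ]
    ring
  have h2 : ∫ t in c..1, (min (t + δ) 1) * t ^ (K - 2) = ∫ t in c..1, t ^ (K - 2) := by
    apply integral_congr
    intro t ht
    rw [Set.uIcc_of_le hc1] at ht
    have : (1:ℝ) ≤ t + δ := by have := ht.1; simp only [hc] at this; linarith
    show min (t + δ) 1 * t ^ (K - 2) = t ^ (K - 2)
    rw [min_eq_right this, one_mul]
  have e1 : ∫ t in (0:ℝ)..c, (t ^ (K - 1) + δ * t ^ (K - 2))
      = (c ^ K - 0) / K + δ * ((c ^ (K-1) - 0) / ((K:ℝ) - 1)) := by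
    rw [integral_add (f := fun t : ℝ => t ^ (K - 1)) (g := fun t : ℝ => δ * t ^ (K - 2)) ((continuous_pow _).intervalIntegrable _ _)
      (((continuous_const.mul (continuous_pow _)) : Continuous fun t : ℝ => δ * t ^ (K - 2)).intervalIntegrable _ _),
      intervalIntegral.integral_const_mul, integral_pow, integral_pow]
    have c1 : ((K - 1 : ℕ) : ℝ) + 1 = (K : ℝ) := by
      have : ((K - 1 : ℕ) : ℝ) = (K : ℝ) - 1 := by
        rw [Nat.cast_sub (by omega)]; simp
      rw [this]; ring
    have c2 : ((K - 2 : ℕ) : ℝ) + 1 = (K : ℝ) - 1 := by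
      have : ((K - 2 : ℕ) : ℝ) = (K : ℝ) - 2 := by
        rw [Nat.cast_sub (by omega)]; simp
      rw [this]; ring
    have n1 : (K - 1) + 1 = K := by omega
    have n2 : (K - 2) + 1 = K - 1 := by omega
    rw [n1, n2, c1, c2, zero_pow (by omega : K ≠ 0), zero_pow (by omega : K - 1 ≠ 0)]
  have e2 : ∫ t in c..1, t ^ (K - 2) = ((1:ℝ) - c ^ (K-1)) / ((K:ℝ) - 1) := by
    rw [integral_pow]
    have c2 : ((K - 2 : ℕ) : ℝ) + 1 = (K : ℝ) - 1 := by
      have : ((K - 2 : ℕ) : ℝ) = (K : ℝ) - 2 := by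
        rw [Nat.cast_sub (by omega)]; simp
      rw [this]; ring
    have n2 : (K - 2) + 1 = K - 1 := by omega
    rw [n2, c2, one_pow]
  rw [hsplit, h1, h2, e1, e2]
  have hK0 : (K : ℝ) ≠ 0 := by positivity
  have hK1 : (K : ℝ) - 1 ≠ 0 := by
    have : (2:ℝ) ≤ (K:ℝ) := by exact_mod_cast hK
    linarith
  have hcc : c ^ (K - 1) * c = c ^ K := by
    rw [← pow_succ]; congr 1; omega
  have hδc : δ = 1 - c := by rw [hc]; ring
  rw [hδc, ← hcc]
  field_simp
  ring


private lemma auxVol (K : ℕ) (hK : 2 ≤ K) (δ : ℝ) (hδ0 : 0 ≤ δ) (hδ1 : δ ≤ 1)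
    (k1 k2 : Fin K) (hk : k1 ≠ k2) :
    volume {x : Fin K → ℝ | (∀ i, x i ∈ Set.Icc (0:ℝ) 1) ∧ x k2 - δ ≤ x k1 ∧
      ∀ k, k ≠ k1 → k ≠ k2 → x k ≤ x k1}
      = ∫⁻ t, Set.indicator (Set.Icc (0:ℝ) 1)
          (fun t => ENNReal.ofReal ((min (t + δ) 1) * t ^ (K - 2))) t := by
  classical
  set sub := {i : Fin K // ¬ i = k1}
  set jk2 : sub := ⟨k2, fun h => hk h.symm⟩ with hjk2
  set S : Set (Fin K → ℝ) := {x : Fin K → ℝ | (∀ i, x i ∈ Set.Icc (0:ℝ) 1) ∧ x k2 - δ ≤ x k1 ∧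
      ∀ k, k ≠ k1 → k ≠ k2 → x k ≤ x k1} with hS
  set T : Set (ℝ × (sub → ℝ)) :=
    ({p | p.1 ∈ Set.Icc (0:ℝ) 1} ∩ (⋂ j : sub, {p | p.2 j ∈ Set.Icc (0:ℝ) 1})
      ∩ {p | p.2 jk2 ≤ p.1 + δ})
      ∩ (⋂ j : sub, ⋂ _h : (j : Fin K) ≠ k2, {p | p.2 j ≤ p.1}) with hT
  have hTmeas : MeasurableSet T := by
    refine (((measurable_fst measurableSet_Icc).inter
      (MeasurableSet.iInter fun j =>
        (measurable_snd.eval) measurableSet_Icc)).inter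
      (measurableSet_le (measurable_snd.eval)
        (measurable_fst.add_const δ))).inter
      (MeasurableSet.iInter fun j => MeasurableSet.iInter fun _ =>
        measurableSet_le (measurable_snd.eval) measurable_fst)
  -- measure preserving map
  set F : (Fin K → ℝ) → ℝ × (sub → ℝ) :=
    fun x => (x k1, fun j : sub => x j) with hF
  have hmp : MeasurePreserving F (volume : Measure (Fin K → ℝ))
      ((volume : Measure ℝ).prod (volume : Measure (sub → ℝ))) := by
    have h1 := measurePreserving_piEquivPiSubtypeProd (fun _ : Fin K => (volume : Measure ℝ)) (· = k1)
    have h2a : MeasurePreserving (⇑(MeasurableEquiv.funUnique {i : Fin K // i = k1} ℝ))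
        (@Measure.pi {i : Fin K // i = k1} (fun _ => ℝ) (Subtype.fintype _)
          (fun _ => Real.measurableSpace) fun _ => (volume : Measure ℝ)) (volume : Measure ℝ) := by
      convert measurePreserving_funUnique (volume : Measure ℝ) {i : Fin K // i = k1} using 2
      rfl
    have h3 := (h2a.prod
      (MeasurePreserving.id (Measure.pi fun _ : sub => (volume : Measure ℝ)))).comp h1
    have hFe : F = Prod.map (⇑(MeasurableEquiv.funUnique {i : Fin K // i = k1} ℝ)) id ∘
        ⇑(MeasurableEquiv.piEquivPiSubtypeProd (fun _ : Fin K => ℝ) (· = k1)) := by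
      funext x
      have hd : ((default : {i : Fin K // i = k1}) : Fin K) = k1 := (default : {i : Fin K // i = k1}).2
      simp [MeasurableEquiv.piEquivPiSubtypeProd, MeasurableEquiv.funUnique, Equiv.funUnique, hd, hF]
      rfl
    rw [hFe, volume_pi, show (volume : Measure (sub → ℝ)) = Measure.pi fun _ => volume from volume_pi]
    exact h3
  have hpre : F ⁻¹' T = S := by
    ext x
    simp only [hT, hF, hS, Set.mem_preimage, Set.mem_inter_iff, Set.mem_iInter, Set.mem_setOf_eq,
      Set.mem_Icc]
    constructor
    · rintro ⟨⟨⟨h1, h2⟩, h3⟩, h4⟩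
      refine ⟨fun i => ?_, by simpa [hjk2, sub_le_iff_le_add] using h3, fun k hk1 hk2 => h4 ⟨k, hk1⟩ hk2⟩
      by_cases hik : i = k1
      · subst hik; exact h1
      · exact h2 ⟨i, hik⟩
    · rintro ⟨h1, h2, h3⟩
      exact ⟨⟨⟨h1 k1, fun j => h1 j⟩, by simpa [hjk2, sub_le_iff_le_add] using h2⟩,
        fun j hj => h3 j j.2 hj⟩
  have hcard : Fintype.card sub = K - 1 := by
    simp [sub, Fintype.card_subtype_compl, Fintype.card_fin]
  -- main computation
  calc volume S = ((volume : Measure ℝ).prod (volume : Measure (sub → ℝ))) T := by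
        rw [← hpre]; exact hmp.measure_preimage hTmeas.nullMeasurableSet
    _ = ∫⁻ t, (volume : Measure (sub → ℝ)) (Prod.mk t ⁻¹' T) := Measure.prod_apply hTmeas
    _ = ∫⁻ t, Set.indicator (Set.Icc (0:ℝ) 1)
          (fun t => ENNReal.ofReal ((min (t + δ) 1) * t ^ (K - 2))) t := by
        congr 1
        funext t
        by_cases ht : t ∈ Set.Icc (0:ℝ) 1
        · rw [Set.indicator_of_mem ht]
          obtain ⟨ht0, ht1⟩ := ht
          have hslice : Prod.mk t ⁻¹' T = Set.univ.pi
              (fun j : sub => if (j : Fin K) = k2 then Set.Icc 0 (min (t + δ) 1)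
                else Set.Icc 0 t) := by
            ext y
            simp only [hT, Set.mem_preimage, Set.mem_inter_iff, Set.mem_iInter, Set.mem_setOf_eq,
              Set.mem_Icc, Set.mem_pi, Set.mem_univ, forall_const]
            constructor
            · rintro ⟨⟨⟨-, h2⟩, h3⟩, h4⟩ j
              by_cases hj : (j : Fin K) = k2
              · have : j = jk2 := Subtype.ext (by simp [hjk2, hj])
                subst this
                simp only [hj, if_pos]
                exact Set.mem_Icc.mpr ⟨(h2 jk2).1, le_min h3 (h2 jk2).2⟩
              · simp only [hj, if_neg, if_false]
                exact Set.mem_Icc.mpr ⟨(h2 j).1, h4 j hj⟩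
            · intro h
              have hmem : ∀ j : sub, y j ∈ Set.Icc (0:ℝ) 1 := by
                intro j
                have := h j
                by_cases hj : (j : Fin K) = k2 <;> simp only [hj, if_pos, if_neg, if_false] at this
                · exact ⟨this.1, this.2.trans (min_le_right _ _)⟩
                · exact ⟨this.1, this.2.trans ht1⟩
              refine ⟨⟨⟨⟨ht0, ht1⟩, fun j => hmem j⟩, ?_⟩, fun j hj => ?_⟩
              · have := h jk2
                simp only [hjk2, if_pos] at this
                exact this.2.trans (min_le_left _ _)
              · have := h j
                simp only [hj, if_neg, if_false] at this
                exact this.2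
          rw [hslice, show (volume : Measure (sub → ℝ)) = Measure.pi fun _ => volume from volume_pi,
            Measure.pi_pi]
          have hvol : ∀ j : sub, (volume : Measure ℝ)
              (if (j : Fin K) = k2 then Set.Icc 0 (min (t + δ) 1) else Set.Icc 0 t)
              = if (j : Fin K) = k2 then ENNReal.ofReal (min (t + δ) 1) else ENNReal.ofReal t := by
            intro j
            by_cases hj : (j : Fin K) = k2 <;> simp [hj, Real.volume_Icc]
          rw [Finset.prod_congr rfl (fun j _ => hvol j)]
          rw [← Finset.mul_prod_erase Finset.univ _ (Finset.mem_univ jk2)]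
          have hjk2c : ((jk2 : sub) : Fin K) = k2 := rfl
          rw [if_pos hjk2c]
          have hprod : ∏ j ∈ Finset.univ.erase jk2,
              (if (j : Fin K) = k2 then ENNReal.ofReal (min (t + δ) 1) else ENNReal.ofReal t)
              = ENNReal.ofReal t ^ (K - 2) := by
            rw [Finset.prod_congr rfl (fun j hj => ?_), Finset.prod_const]
            · congr 1
              rw [Finset.card_erase_of_mem (Finset.mem_univ _), Finset.card_univ, hcard]
              omega
            · have hjne : j ≠ jk2 := Finset.ne_of_mem_erase hj
              have : (j : Fin K) ≠ k2 := fun h => hjne (Subtype.ext (by simp [hjk2, h]))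
              rw [if_neg this]
          rw [hprod]
          rw [← ENNReal.ofReal_pow ht0, ← ENNReal.ofReal_mul (le_min (by linarith) zero_le_one)]
        · rw [Set.indicator_of_notMem ht]
          have : Prod.mk t ⁻¹' T = ∅ := by
            ext y
            simp only [hT, Set.mem_preimage, Set.mem_inter_iff, Set.mem_iInter, Set.mem_setOf_eq,
              Set.mem_empty_iff_false, iff_false]
            rintro ⟨⟨⟨h1, -⟩, -⟩, -⟩
            exact ht h1
          rw [this, measure_empty]

/-- The volume of `R̂^{k1,k2}(δ) = {x ∈ [0,1]^K : x^{k1} ≥ x^{k2} − δ, x^{k1} ≥ x^k ∀ k ∉ {k1,k2}}`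
equals `(1/(K−1))·(1 − (1−δ)^K/K)`. -/
theorem stmt1 (K : ℕ) (hK : 2 ≤ K) (δ : ℝ) (hδ0 : 0 ≤ δ) (hδ1 : δ ≤ 1)
    (k1 k2 : Fin K) (hk : k1 ≠ k2) :
    volume {x : Fin K → ℝ | (∀ i, x i ∈ Set.Icc (0:ℝ) 1) ∧ x k2 - δ ≤ x k1 ∧
      ∀ k, k ≠ k1 → k ≠ k2 → x k ≤ x k1}
      = ENNReal.ofReal ((1 / ((K : ℝ) - 1)) * (1 - (1 - δ) ^ K / K)) := by
  rw [auxVol K hK δ hδ0 hδ1 k1 k2 hk]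
  set f : ℝ → ℝ := fun t => (min (t + δ) 1) * t ^ (K - 2) with hf
  have hcont : Continuous f := by continuity
  have hint : Integrable f (volume.restrict (Set.Icc (0:ℝ) 1)) := hcont.integrableOn_Icc
  have hnn : 0 ≤ᶠ[ae (volume.restrict (Set.Icc (0:ℝ) 1))] f := by
    filter_upwards [ae_restrict_mem measurableSet_Icc] with t ht
    exact mul_nonneg (le_min (by linarith [ht.1]) zero_le_one) (pow_nonneg ht.1 _)
  rw [lintegral_indicator measurableSet_Icc, ← ofReal_integral_eq_lintegral_ofReal hint hnn]
  congr 1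
  rw [MeasureTheory.integral_Icc_eq_integral_Ioc,
    ← intervalIntegral.integral_of_le (zero_le_one : (0:ℝ) ≤ 1)]
  exact calcA K hK δ hδ0 hδ1
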